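/- For each k ≥ 1, the polynomial function r_k(f) = ∫ f^k vol(ξ,η) on even elements f of the Grassmann algebra is invariant under the adjoint action of the Poisson superalgebra: ∫ {g, f}·f^{k-1}·k vol = 0, i.e., the directional derivative of r_k along ad_g vanishes for every g. -/

import Mathlib

/- The Grassmann algebra Λ[ξ₁,…,ξₙ,η₁,…,ηₙ] over ℂ, modelled as the exterior
algebra on the 2n-dimensional space `Fin n ⊕ Fin n → ℂ`. -/

noncomputable section

open CliffordAlgebra

section AuxGeneric

variable {R M : Type*} [CommRing R] [AddCommGroup M] [Module R M]

/-- Leibniz rule for the contraction: `d ⌋ (x*y) = (d⌋x)*y + involute x * (d⌋y)`. -/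
theorem my_contractLeft_mul {Q : QuadraticForm R M} (d : Module.Dual R M)
    (x y : CliffordAlgebra Q) :
    contractLeft d (x * y) =
      contractLeft d x * y + involute x * contractLeft d y := by
  induction x using CliffordAlgebra.induction generalizing y with
  | algebraMap r =>
      rw [contractLeft_algebraMap, AlgHom.commutes, zero_mul, zero_add,
        contractLeft_algebraMap_mul]
  | ι m =>
      rw [contractLeft_ι_mul, contractLeft_ι, involute_ι, Algebra.smul_def, neg_mul,
        sub_eq_add_neg]
  | mul a b ha hb =>
      rw [mul_assoc, ha, hb, ha, map_mul]
      noncomm_ring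
  | add a b ha hb =>
      simp only [add_mul, map_add, ha, hb, map_add]
      abel

/-- The contraction anticommutes with the grade involution. -/
theorem my_contractLeft_involute {Q : QuadraticForm R M} (d : Module.Dual R M)
    (x : CliffordAlgebra Q) :
    contractLeft d (involute x) = - involute (contractLeft d x) := by
  induction x using CliffordAlgebra.induction with
  | algebraMap r => simp [contractLeft_algebraMap]
  | ι m => simp [involute_ι, contractLeft_ι]
  | mul a b ha hb =>
      rw [map_mul, my_contractLeft_mul, my_contractLeft_mul, ha, hb, involute_involute,
        map_add, map_mul, map_mul, involute_involute]
      noncomm_ring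
  | add a b ha hb => simp only [map_add, ha, hb]; abel

/-- Contractions pairwise anticommute. -/
theorem my_contract_anticomm {Q : QuadraticForm R M} (d d' : Module.Dual R M) :
    (contractLeft (Q := Q) d') ∘ₗ contractLeft d = -(contractLeft d ∘ₗ contractLeft d') := by
  ext x
  exact contractLeft_comm (d := d') (d' := d) x

/-- Contractions square to zero. -/
theorem my_contract_sq {Q : QuadraticForm R M} (d : Module.Dual R M) :
    (contractLeft (Q := Q) d) ∘ₗ contractLeft d = 0 := by
  ext x
  exact contractLeft_contractLeft (d := d) x

theorem my_foldl_comp {N : Type*} [AddCommGroup N] [Module R N]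
    (l : List (N →ₗ[R] N)) (c : N →ₗ[R] N) :
    l.foldl (fun acc d => d ∘ₗ acc) c =
      (l.foldl (fun acc d => d ∘ₗ acc) LinearMap.id) ∘ₗ c := by
  induction l generalizing c with
  | nil => simp [List.foldl]
  | cons a t ih =>
      simp only [List.foldl_cons]
      rw [ih (a ∘ₗ c), ih (a ∘ₗ LinearMap.id)]
      simp [LinearMap.comp_assoc]

theorem my_foldl_comp_zero {N : Type*} [AddCommGroup N] [Module R N]
    (l : List (N →ₗ[R] N)) (D : N →ₗ[R] N) (hD : D ∘ₗ D = 0)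
    (hanti : ∀ a ∈ l, a ∘ₗ D = -(D ∘ₗ a)) (hmem : D ∈ l) :
    (l.foldl (fun acc d => d ∘ₗ acc) LinearMap.id) ∘ₗ D = 0 := by
  induction l with
  | nil => simp at hmem
  | cons a t ih =>
      simp only [List.foldl_cons, LinearMap.comp_id]
      rw [my_foldl_comp, LinearMap.comp_assoc]
      rcases List.mem_cons.mp hmem with h | h
      · rw [← h, hD, LinearMap.comp_zero]
      · rw [hanti a (List.mem_cons_self), LinearMap.comp_neg,
          ← LinearMap.comp_assoc, ih (fun b hb => hanti b (List.mem_cons_of_mem a hb)) h,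
          LinearMap.zero_comp, neg_zero]

/-- A product of two generators is central in the exterior algebra. -/
theorem my_ιι_central (a b : M) (x : ExteriorAlgebra R M) :
    (ExteriorAlgebra.ι R a * ExteriorAlgebra.ι R b) * x =
      x * (ExteriorAlgebra.ι R a * ExteriorAlgebra.ι R b) := by
  induction x using CliffordAlgebra.induction with
  | algebraMap r => rw [← Algebra.commutes]
  | ι c =>
      have h1 : ExteriorAlgebra.ι R b * ExteriorAlgebra.ι R c
          = -(ExteriorAlgebra.ι R c * ExteriorAlgebra.ι R b) :=
        eq_neg_of_add_eq_zero_left (ExteriorAlgebra.ι_add_mul_swap b c)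
      have h2 : ExteriorAlgebra.ι R a * ExteriorAlgebra.ι R c
          = -(ExteriorAlgebra.ι R c * ExteriorAlgebra.ι R a) :=
        eq_neg_of_add_eq_zero_left (ExteriorAlgebra.ι_add_mul_swap a c)
      calc ExteriorAlgebra.ι R a * ExteriorAlgebra.ι R b * ExteriorAlgebra.ι R c
          = ExteriorAlgebra.ι R a * (ExteriorAlgebra.ι R b * ExteriorAlgebra.ι R c) := by
            rw [mul_assoc]
        _ = -(ExteriorAlgebra.ι R a * ExteriorAlgebra.ι R c * ExteriorAlgebra.ι R b) := by
            rw [h1]; noncomm_ring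
        _ = ExteriorAlgebra.ι R c * (ExteriorAlgebra.ι R a * ExteriorAlgebra.ι R b) := by
            rw [h2]; noncomm_ring
  | mul u v hu hv => rw [← mul_assoc, hu, mul_assoc, hv, ← mul_assoc]
  | add u v hu hv => rw [mul_add, add_mul, hu, hv]

/-- Even elements of the exterior algebra are central. -/
theorem my_even_central {f : ExteriorAlgebra R M}
    (hf : f ∈ evenOdd (0 : QuadraticForm R M) 0) (x : ExteriorAlgebra R M) :
    f * x = x * f := by
  induction f, hf using even_induction with
  | algebraMap r => rw [← Algebra.commutes]
  | add u v hu hv ihu ihv => rw [add_mul, mul_add, ihu, ihv]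
  | ι_mul_ι_mul m₁ m₂ u hu ihu =>
      rw [mul_assoc, ihu, ← mul_assoc, my_ιι_central, mul_assoc]

/-- The derivative of a power of an even element. -/
theorem my_contract_pow (d : Module.Dual R M) {f : ExteriorAlgebra R M}
    (hf : f ∈ evenOdd (0 : QuadraticForm R M) 0) (m : ℕ) :
    contractLeft (Q := (0 : QuadraticForm R M)) d (f ^ (m + 1)) =
      (m + 1) • (contractLeft (Q := (0 : QuadraticForm R M)) d f * f ^ m) := by
  induction m with
  | zero => simp
  | succ m ih =>
      have hfi : involute f = f := involute_eq_of_mem_even hf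
      rw [pow_succ' f (m + 1), my_contractLeft_mul, ih, hfi, mul_smul_comm,
        ← mul_assoc, my_even_central hf (contractLeft d f), mul_assoc, ← pow_succ' f m,
        succ_nsmul]
      module

end AuxGeneric

/-- The Grassmann algebra on generators ξ_i, η_i. -/
abbrev Grass (n : ℕ) := ExteriorAlgebra ℂ (Fin n ⊕ Fin n → ℂ)

/-- The generator ξ_i. -/
def ξ (n : ℕ) (i : Fin n) : Grass n := ExteriorAlgebra.ι ℂ (Pi.single (Sum.inl i) 1)

/-- The generator η_i. -/
def η (n : ℕ) (i : Fin n) : Grass n := ExteriorAlgebra.ι ℂ (Pi.single (Sum.inr i) 1)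

/-- The odd superderivation ∂/∂ξ_i (contraction with the dual of ξ_i). -/
def Dξ (n : ℕ) (i : Fin n) : Grass n →ₗ[ℂ] Grass n :=
  contractLeft (Q := (0 : QuadraticForm ℂ (Fin n ⊕ Fin n → ℂ))) (LinearMap.proj (Sum.inl i))

/-- The odd superderivation ∂/∂η_i. -/
def Dη (n : ℕ) (i : Fin n) : Grass n →ₗ[ℂ] Grass n :=
  contractLeft (Q := (0 : QuadraticForm ℂ (Fin n ⊕ Fin n → ℂ))) (LinearMap.proj (Sum.inr i))

/-- The sign-twisted derivative `f ↦ (-1)^{p(f)} D f`.  Since `D` reverses parity,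
`(-1)^{p(f)} D f = - involute (D f)` for homogeneous `f`, and the right-hand side is linear. -/
def tw {n : ℕ} (D : Grass n →ₗ[ℂ] Grass n) : Grass n →ₗ[ℂ] Grass n :=
  - (involute.toLinearMap ∘ₗ D)

/-- The Poisson bracket {f,g} = (-1)^{p(f)} Σ_i (∂f/∂ξ_i ∂g/∂η_i + ∂f/∂η_i ∂g/∂ξ_i). -/
def pbr {n : ℕ} (f g : Grass n) : Grass n :=
  ∑ i : Fin n, (tw (Dξ n i) f * Dη n i g + tw (Dη n i) f * Dξ n i g)


/-- The Berezin integral on the Grassmann algebra: the coefficient of the top monomial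
ξ₁⋯ξₙη₁⋯ηₙ, obtained by contracting with all 2n generators and taking the constant term. -/
def berezin (n : ℕ) : Grass n →ₗ[ℂ] ℂ :=
  (ExteriorAlgebra.algebraMapInv).toLinearMap ∘ₗ
    (((List.ofFn fun i : Fin n => Dξ n i) ++ (List.ofFn fun i : Fin n => Dη n i)).foldl
      (fun acc d => d ∘ₗ acc) LinearMap.id)

/-- The integral of a total derivative vanishes. -/
theorem berezin_contract (n : ℕ) (D : Grass n →ₗ[ℂ] Grass n)
    (hD : D ∈ (List.ofFn fun i : Fin n => Dξ n i) ++ (List.ofFn fun i : Fin n => Dη n i))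
    (d : Module.Dual ℂ (Fin n ⊕ Fin n → ℂ))
    (hDd : D = contractLeft (Q := (0 : QuadraticForm ℂ (Fin n ⊕ Fin n → ℂ))) d)
    (x : Grass n) : berezin n (D x) = 0 := by
  set l := (List.ofFn fun i : Fin n => Dξ n i) ++ (List.ofFn fun i : Fin n => Dη n i) with hl
  have hanti : ∀ a ∈ l, a ∘ₗ D = -(D ∘ₗ a) := by
    intro a ha
    rcases List.mem_append.mp ha with h | h <;>
      obtain ⟨i, rfl⟩ := List.mem_ofFn.mp h
    · rw [hDd]; exact my_contract_anticomm d (LinearMap.proj (Sum.inl i))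
    · rw [hDd]; exact my_contract_anticomm d (LinearMap.proj (Sum.inr i))
  have hDD : D ∘ₗ D = 0 := by rw [hDd]; exact my_contract_sq d
  have key := my_foldl_comp_zero l D hDD hanti hD
  have : berezin n (D x) =
      ExteriorAlgebra.algebraMapInv
        (((l.foldl (fun acc d => d ∘ₗ acc) LinearMap.id) ∘ₗ D) x) := rfl
  rw [this, key]
  simp

/-- Integration by parts for the Berezin integral. -/
theorem berezin_parts (n : ℕ) (D : Grass n →ₗ[ℂ] Grass n)
    (hber : ∀ x, berezin n (D x) = 0)
    (d : Module.Dual ℂ (Fin n ⊕ Fin n → ℂ))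
    (hDd : D = contractLeft (Q := (0 : QuadraticForm ℂ (Fin n ⊕ Fin n → ℂ))) d)
    (g F : Grass n) :
    berezin n (tw D g * F) = - berezin n (g * D F) := by
  have h0 := hber (involute g * F)
  rw [hDd] at h0 ⊢
  rw [my_contractLeft_mul, my_contractLeft_involute, involute_involute, map_add] at h0
  have htw : tw (contractLeft (Q := (0 : QuadraticForm ℂ (Fin n ⊕ Fin n → ℂ))) d) g
      = -involute (contractLeft (Q := (0 : QuadraticForm ℂ (Fin n ⊕ Fin n → ℂ))) d g) := rfl
  rw [htw]
  linear_combination h0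

theorem berezin_Dξ (n : ℕ) (i : Fin n) (x : Grass n) : berezin n (Dξ n i x) = 0 :=
  berezin_contract n (Dξ n i)
    (List.mem_append_left _ (List.mem_ofFn.mpr ⟨i, rfl⟩))
    (LinearMap.proj (Sum.inl i)) rfl x

theorem berezin_Dη (n : ℕ) (i : Fin n) (x : Grass n) : berezin n (Dη n i x) = 0 :=
  berezin_contract n (Dη n i)
    (List.mem_append_right _ (List.mem_ofFn.mpr ⟨i, rfl⟩))
    (LinearMap.proj (Sum.inr i)) rfl x

/-- The Berezin integral of any Poisson bracket vanishes. -/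
theorem berezin_pbr (n : ℕ) (g F : Grass n) : berezin n (pbr g F) = 0 := by
  unfold pbr
  rw [map_sum]
  apply Finset.sum_eq_zero
  intro i _
  rw [map_add]
  rw [berezin_parts n (Dξ n i) (berezin_Dξ n i) (LinearMap.proj (Sum.inl i)) rfl g (Dη n i F),
    berezin_parts n (Dη n i) (berezin_Dη n i) (LinearMap.proj (Sum.inr i)) rfl g (Dξ n i F)]
  have hc : Dξ n i ∘ₗ Dη n i = -(Dη n i ∘ₗ Dξ n i) :=
    my_contract_anticomm (R := ℂ) (M := Fin n ⊕ Fin n → ℂ) (Q := 0)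
      (LinearMap.proj (Sum.inr i)) (LinearMap.proj (Sum.inl i))
  have hc' := LinearMap.ext_iff.mp hc F
  simp only [LinearMap.comp_apply, LinearMap.neg_apply] at hc'
  rw [hc']
  simp [mul_neg]

/-- for every k ≥ 1 the polynomial r_k(f) = ∫ f^k vol on even elements f is
invariant under the adjoint action: k·∫ {g,f}·f^{k-1} vol = 0 for every g, i.e. the
directional derivative of r_k along ad_g vanishes. -/
theorem rk_invariant (n : ℕ) (k : ℕ) (hk : 1 ≤ k) (f g : Grass n)
    (hf : f ∈ evenOdd (0 : QuadraticForm ℂ (Fin n ⊕ Fin n → ℂ)) 0) :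
    (k : ℂ) * berezin n (pbr g f * f ^ (k - 1)) = 0 := by
  obtain ⟨m, rfl⟩ : ∃ m, k = m + 1 := ⟨k - 1, (Nat.succ_pred_eq_of_pos hk).symm⟩
  simp only [Nat.add_sub_cancel]
  have hpow : pbr g (f ^ (m + 1)) = (m + 1) • (pbr g f * f ^ m) := by
    unfold pbr
    rw [Finset.sum_mul, Finset.smul_sum]
    apply Finset.sum_congr rfl
    intro i _
    rw [show Dη n i (f ^ (m + 1)) = (m + 1) • (Dη n i f * f ^ m) from
        my_contract_pow (R := ℂ) (M := Fin n ⊕ Fin n → ℂ)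
          (LinearMap.proj (Sum.inr i)) hf m,
      show Dξ n i (f ^ (m + 1)) = (m + 1) • (Dξ n i f * f ^ m) from
        my_contract_pow (R := ℂ) (M := Fin n ⊕ Fin n → ℂ)
          (LinearMap.proj (Sum.inl i)) hf m,
      mul_smul_comm, mul_smul_comm, ← smul_add]
    congr 1
    rw [add_mul, mul_assoc, mul_assoc]
  have h := berezin_pbr n g (f ^ (m + 1))
  rw [hpow, map_nsmul, nsmul_eq_mul, Nat.cast_add, Nat.cast_one] at h
  push_cast
  linear_combination h

end
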